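/- Let Φ = (A; A*; {E_i}; {E*_i}) be a Leonard system of diameter d in a K-algebra 𝒜 isomorphic to Mat_{d+1}(K). Then the (d+1)^2 elements A^r E*_0 A^s for 0 ≤ r, s ≤ d form a basis of the K-vector space 𝒜. -/

import Mathlib

open Matrix Polynomial

def IsTridiag {K : Type*} [Field K] {n : ℕ} (M : Matrix (Fin n) (Fin n) K) : Prop :=
  ∀ i j : Fin n, ((i : ℕ) + 1 < j ∨ (j : ℕ) + 1 < i) → M i j = 0

def IsIrredTridiag {K : Type*} [Field K] {n : ℕ} (M : Matrix (Fin n) (Fin n) K) : Prop :=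
  IsTridiag M ∧ ∀ i j : Fin n, ((i : ℕ) + 1 = j ∨ (j : ℕ) + 1 = i) → M i j ≠ 0

/-- Entry of a matrix with natural-number indices; `0` when out of range. -/
def mentry {K : Type*} [Field K] {n : ℕ} (M : Matrix (Fin n) (Fin n) K) (i j : ℕ) : K :=
  if h : i < n ∧ j < n then M ⟨i, h.1⟩ ⟨j, h.2⟩ else 0

/-- A family indexed by `Fin (d+1)` viewed as indexed by `ℕ`, with value `0` out of range. -/
def natIdx {d : ℕ} {M : Type*} [Zero M] (E : Fin (d+1) → M) (n : ℕ) : M :=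
  if h : n < d + 1 then E ⟨n, h⟩ else 0

/-- A Leonard system of diameter `d` in the matrix algebra `Mat_{d+1}(K)`:
`A`, `As` are multiplicity-free with eigenvalues `θ i`, `θs i` and primitive
idempotents `E i`, `Es i`, satisfying the tridiagonal conditions. -/
structure LeonardSystem (K : Type*) [Field K] (d : ℕ) where
  A : Matrix (Fin (d+1)) (Fin (d+1)) K
  As : Matrix (Fin (d+1)) (Fin (d+1)) K
  E : Fin (d+1) → Matrix (Fin (d+1)) (Fin (d+1)) K
  Es : Fin (d+1) → Matrix (Fin (d+1)) (Fin (d+1)) K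
  θ : Fin (d+1) → K
  θs : Fin (d+1) → K
  θ_inj : Function.Injective θ
  θs_inj : Function.Injective θs
  E_ne : ∀ i, E i ≠ 0
  Es_ne : ∀ i, Es i ≠ 0
  E_mul : ∀ i j, E i * E j = if i = j then E i else 0
  Es_mul : ∀ i j, Es i * Es j = if i = j then Es i else 0
  E_sum : ∑ i, E i = 1
  Es_sum : ∑ i, Es i = 1
  A_eq : A = ∑ i, θ i • E i
  As_eq : As = ∑ i, θs i • Es i
  EAsE_zero : ∀ i j : Fin (d+1), ((i:ℕ) + 1 < j ∨ (j:ℕ) + 1 < i) → E i * As * E j = 0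
  EAsE_ne : ∀ i j : Fin (d+1), ((i:ℕ) + 1 = j ∨ (j:ℕ) + 1 = i) → E i * As * E j ≠ 0
  EsAEs_zero : ∀ i j : Fin (d+1), ((i:ℕ) + 1 < j ∨ (j:ℕ) + 1 < i) → Es i * A * Es j = 0
  EsAEs_ne : ∀ i j : Fin (d+1), ((i:ℕ) + 1 = j ∨ (j:ℕ) + 1 = i) → Es i * A * Es j ≠ 0

/-- A Leonard pair in `Mat_{d+1}(K)`. -/
structure LeonardPair (K : Type*) [Field K] (d : ℕ) where
  A : Matrix (Fin (d+1)) (Fin (d+1)) K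
  As : Matrix (Fin (d+1)) (Fin (d+1)) K
  cond1 : ∃ P : Matrix (Fin (d+1)) (Fin (d+1)) K, IsUnit P ∧
    IsIrredTridiag (P⁻¹ * A * P) ∧ (P⁻¹ * As * P).IsDiag
  cond2 : ∃ P : Matrix (Fin (d+1)) (Fin (d+1)) K, IsUnit P ∧
    (P⁻¹ * A * P).IsDiag ∧ IsIrredTridiag (P⁻¹ * As * P)

section AuxLeonard
variable {K : Type*} [Field K] {d : ℕ}

lemma exists_mulVec_ne_zero {n : ℕ} {M : Matrix (Fin n) (Fin n) K} (h : M ≠ 0) :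
    ∃ x, M.mulVec x ≠ 0 := by
  by_contra hc
  push_neg at hc
  apply h
  ext i j
  have := congrFun (hc (Pi.single j 1)) i
  simpa [Matrix.mulVec_single] using this

lemma rank_one_of_orth (F : Fin (d+1) → Matrix (Fin (d+1)) (Fin (d+1)) K)
    (horth : ∀ i j, i ≠ j → F i * F j = 0) (hidem : ∀ i, F i * F i = F i)
    (hne : ∀ i, F i ≠ 0) (i : Fin (d+1)) :
    ∃ u : Fin (d+1) → K, u ≠ 0 ∧ (F i).mulVec u = u ∧
      ∀ w, ∃ c : K, (F i).mulVec w = c • u := by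
  set V : Fin (d+1) → Submodule K (Fin (d+1) → K) :=
    fun j => LinearMap.range (F j).mulVecLin with hV
  -- the summation map is injective
  have hL : Function.Injective
      (LinearMap.lsum K (fun j => V j) K (fun j => (V j).subtype)) := by
    rw [← LinearMap.ker_eq_bot, LinearMap.ker_eq_bot']
    intro x hx
    have hx' : ∑ j, ((x j : Fin (d+1) → K)) = 0 := by
      simpa [LinearMap.lsum_apply] using hx
    have key : ∀ j, (x j : Fin (d+1) → K) = 0 := by
      intro j
      have hmem : ∀ k, ∃ w, (F k).mulVec w = (x k : Fin (d+1) → K) := fun k => (x k).2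
      have hsum := map_sum ((F j).mulVecLin) (fun k => ((x k : Fin (d+1) → K))) Finset.univ
      simp only [Matrix.mulVecLin_apply] at hsum
      have : (F j).mulVec (∑ k, ((x k : Fin (d+1) → K))) = (x j : Fin (d+1) → K) := by
        rw [hsum, Finset.sum_eq_single j]
        · obtain ⟨w, hw⟩ := hmem j
          rw [← hw, Matrix.mulVec_mulVec, hidem j]
        · intro k _ hk
          obtain ⟨w, hw⟩ := hmem k
          rw [← hw, Matrix.mulVec_mulVec, horth j k (Ne.symm hk), Matrix.zero_mulVec]
        · simp
      rw [hx', Matrix.mulVec_zero] at this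
      exact this.symm
    funext j
    exact Subtype.ext (key j)
  have hdim : ∑ j, Module.finrank K (V j) ≤ d + 1 := by
    have := LinearMap.finrank_le_finrank_of_injective hL
    simpa [Module.finrank_pi_fintype, Module.finrank_pi] using this
  have hpos : ∀ j, 1 ≤ Module.finrank K (V j) := by
    intro j
    rw [Nat.one_le_iff_ne_zero]
    intro h0
    rw [Submodule.finrank_eq_zero] at h0
    obtain ⟨x, hx⟩ := exists_mulVec_ne_zero (hne j)
    exact hx (by
      have : (F j).mulVec x ∈ V j := ⟨x, rfl⟩
      simpa [h0] using this)
  have hone : Module.finrank K (V i) = 1 := by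
    by_contra hne1
    have h2 : 2 ≤ Module.finrank K (V i) := by have := hpos i; omega
    have hlt : ∑ _j : Fin (d+1), 1 < ∑ j, Module.finrank K (V j) :=
      Finset.sum_lt_sum (fun j _ => hpos j) ⟨i, Finset.mem_univ i, by omega⟩
    simp only [Finset.sum_const, Finset.card_univ, Fintype.card_fin, smul_eq_mul, mul_one] at hlt
    omega
  rw [finrank_eq_one_iff'] at hone
  obtain ⟨v, hv0, hv⟩ := hone
  obtain ⟨w0, hw0⟩ := v.2
  simp only [Matrix.mulVecLin_apply] at hw0
  refine ⟨(v : Fin (d+1) → K), by simpa using hv0, ?_, ?_⟩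
  · rw [← hw0, Matrix.mulVec_mulVec, hidem i]
  · intro w
    obtain ⟨c, hc⟩ := hv ⟨(F i).mulVec w, ⟨w, by simp [Matrix.mulVecLin_apply]⟩⟩
    exact ⟨c, by simpa using (congrArg Subtype.val hc).symm⟩

lemma sum_mulVec' {n : ℕ} {ι : Type*} (s : Finset ι) (f : ι → Matrix (Fin n) (Fin n) K)
    (v : Fin n → K) : (∑ i ∈ s, f i).mulVec v = ∑ i ∈ s, (f i).mulVec v := by
  induction s using Finset.cons_induction with
  | empty => simp [Matrix.zero_mulVec]
  | cons a s ha ih => rw [Finset.sum_cons, Finset.sum_cons, Matrix.add_mulVec, ih]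

lemma indep_of_tridiag (B : Matrix (Fin (d+1)) (Fin (d+1)) K)
    (F : Fin (d+1) → Matrix (Fin (d+1)) (Fin (d+1)) K)
    (hsum : ∑ j, F j = 1)
    (horth : ∀ i j, i ≠ j → F i * F j = 0)
    (hlow : ∀ i j : Fin (d+1), (j:ℕ) + 1 < (i:ℕ) → F i * B * F j = 0)
    (hsup : ∀ i j : Fin (d+1), (j:ℕ) + 1 = (i:ℕ) → F i * B * F j ≠ 0)
    (u : Fin (d+1) → (Fin (d+1) → K))
    (hspan : ∀ i w, ∃ c : K, (F i).mulVec w = c • u i)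
    (hu0 : (F 0).mulVec (u 0) = u 0) (hu0ne : u 0 ≠ 0) :
    LinearIndependent K (fun r : Fin (d+1) => (B ^ (r:ℕ)).mulVec (u 0)) := by
  have claimA : ∀ (r : ℕ) (j : Fin (d+1)), r < (j:ℕ) → F j * B ^ r * F 0 = 0 := by
    intro r
    induction r with
    | zero =>
      intro j hj
      have : j ≠ 0 := by
        intro h; rw [h] at hj; simp at hj
      simpa using horth j 0 this
    | succ r ih =>
      intro j hj
      have e1 : F j * B ^ (r+1) * F 0 = ∑ k, F j * B * F k * (B ^ r * F 0) := by
        have h2 : F j * B ^ (r+1) * F 0 = F j * B * (∑ k, F k) * (B ^ r * F 0) := by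
          rw [hsum, mul_one, pow_succ']
          noncomm_ring
        rw [h2, Finset.mul_sum, Finset.sum_mul]
      rw [e1]
      apply Finset.sum_eq_zero
      intro k _
      rcases lt_or_ge (k:ℕ) (r+1) with hk | hk
      · rw [hlow j k (by omega), Matrix.zero_mul]
      · rw [mul_assoc (F j * B) (F k) (B ^ r * F 0), ← mul_assoc (F k) (B ^ r) (F 0),
          ih k (by omega), Matrix.mul_zero]
  have vanish : ∀ (r : ℕ) (j : Fin (d+1)), r < (j:ℕ) →
      (F j).mulVec ((B ^ r).mulVec (u 0)) = 0 := by
    intro r j hj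
    rw [← hu0, Matrix.mulVec_mulVec, Matrix.mulVec_mulVec, claimA r j hj, Matrix.zero_mulVec]
  have claimB : ∀ (r : ℕ) (h : r < d+1), (F ⟨r,h⟩ * B ^ r).mulVec (u 0) ≠ 0 := by
    intro r
    induction r with
    | zero =>
      intro h
      have : (F ⟨0, h⟩ * B ^ 0).mulVec (u 0) = u 0 := by
        rw [pow_zero, Matrix.mul_one]
        exact hu0
      rw [this]; exact hu0ne
    | succ r ih =>
      intro h
      have hr : r < d + 1 := by omega
      set rr : Fin (d+1) := ⟨r, hr⟩
      set rr1 : Fin (d+1) := ⟨r+1, h⟩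
      have hW := ih hr
      -- get the spanning coefficient for W r
      obtain ⟨c, hc⟩ := hspan rr ((B ^ r).mulVec (u 0))
      rw [Matrix.mulVec_mulVec] at hc
      have hcne : c ≠ 0 := by
        intro h0
        rw [h0, zero_smul] at hc
        exact hW hc
      have hBu : (F rr1 * B).mulVec (u rr) ≠ 0 := by
        have hM : F rr1 * B * F rr ≠ 0 := hsup rr1 rr rfl
        obtain ⟨x0, hx0⟩ := exists_mulVec_ne_zero hM
        obtain ⟨c0, hc0⟩ := hspan rr x0
        intro hz
        apply hx0
        calc (F rr1 * B * F rr).mulVec x0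
            = (F rr1 * B).mulVec ((F rr).mulVec x0) := (Matrix.mulVec_mulVec x0 _ _).symm
          _ = (F rr1 * B).mulVec (c0 • u rr) := by rw [hc0]
          _ = c0 • (F rr1 * B).mulVec (u rr) := Matrix.mulVec_smul _ _ _
          _ = 0 := by rw [hz, smul_zero]
      -- main equality
      have key : (F rr1 * B ^ (r+1)).mulVec (u 0) = c • (F rr1 * B).mulVec (u rr) := by
        have e0 : (F rr1 * B ^ (r+1)).mulVec (u 0)
            = (F rr1 * B).mulVec ((B ^ r).mulVec (u 0)) := by
          rw [Matrix.mulVec_mulVec, pow_succ', ← mul_assoc]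
        have e1 : (B ^ r).mulVec (u 0) = ∑ k, (F k).mulVec ((B ^ r).mulVec (u 0)) := by
          rw [← sum_mulVec', hsum, Matrix.one_mulVec]
        have e2 : (F rr1 * B ^ (r+1)).mulVec (u 0)
            = ∑ k, (F rr1 * B).mulVec ((F k).mulVec ((B ^ r).mulVec (u 0))) := by
          rw [e0]
          nth_rewrite 1 [e1]
          exact map_sum ((F rr1 * B).mulVecLin) _ _
        rw [e2, Finset.sum_eq_single rr]
        · rw [Matrix.mulVec_mulVec (u 0) (F rr) (B ^ r), hc, Matrix.mulVec_smul]
        · intro k _ hk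
          rcases lt_trichotomy (k:ℕ) r with hkr | hkr | hkr
          · rw [Matrix.mulVec_mulVec, Matrix.mulVec_mulVec, mul_assoc (F rr1) B (F k),
              ← mul_assoc, hlow rr1 k (by simp only [rr1, Fin.val_mk]; omega),
              Matrix.zero_mul, Matrix.zero_mulVec]
          · exact absurd (Fin.ext hkr : k = rr) hk
          · rw [vanish r k hkr, Matrix.mulVec_zero]
        · simp
      rw [key]
      exact smul_ne_zero hcne hBu
  -- now linear independence
  rw [Fintype.linearIndependent_iff]
  intro g hg
  by_contra hgne
  push_neg at hgne
  obtain ⟨i0, hi0⟩ := hgne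
  classical
  set S : Finset (Fin (d+1)) := Finset.univ.filter (fun r => g r ≠ 0) with hS
  have hSne : S.Nonempty := ⟨i0, by simp [hS, hi0]⟩
  set r := S.max' hSne with hrdef
  have hrS : r ∈ S := S.max'_mem hSne
  have hgr : g r ≠ 0 := by
    have := hrS
    rw [hS, Finset.mem_filter] at this
    exact this.2
  have happ := congrArg ((F r).mulVecLin) hg
  simp only [map_sum, _root_.map_smul, Matrix.mulVecLin_apply, map_zero] at happ
  rw [Finset.sum_eq_single r] at happ
  · have hne' : (F r).mulVec ((B ^ (r:ℕ)).mulVec (u 0)) ≠ 0 := by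
      have h1 := claimB (r:ℕ) r.isLt
      rw [Matrix.mulVec_mulVec]
      simpa using h1
    rcases smul_eq_zero.mp happ with h | h
    · exact hgr h
    · exact hne' h
  · intro s _ hs
    rcases lt_or_gt_of_ne (fun h : (s:ℕ) = (r:ℕ) => hs (Fin.ext h)) with hlt | hgt
    · -- s > r impossible in this branch naming; handle both
      -- hlt : (s:ℕ) < (r:ℕ)
      rw [vanish (s:ℕ) r hlt, smul_zero]
    · -- hgt : (s:ℕ) > (r:ℕ), so g s = 0
      have hgs : g s = 0 := by
        by_contra hgs
        have hsS : s ∈ S := by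
          rw [hS, Finset.mem_filter]
          exact ⟨Finset.mem_univ s, hgs⟩
        have := S.le_max' s hsS
        rw [← hrdef] at this
        omega
      rw [hgs, zero_smul]
  · simp

lemma vecMulVec_indep {n : ℕ} {x y : Fin n → (Fin n → K)}
    (hx : LinearIndependent K x) (hy : LinearIndependent K y) :
    LinearIndependent K (fun p : Fin n × Fin n => Matrix.vecMulVec (x p.1) (y p.2)) := by
  rw [Fintype.linearIndependent_iff]
  intro c hc
  have hentry : ∀ i j : Fin n, ∑ p : Fin n × Fin n, c p * (x p.1 i * y p.2 j) = 0 := by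
    intro i j
    have h1 := congrFun (congrFun hc i) j
    simpa [Finset.sum_apply, Matrix.sum_apply, Matrix.vecMulVec_apply] using h1
  have hrow : ∀ (j : Fin n) (r : Fin n), ∑ s, c (r, s) * y s j = 0 := by
    intro j
    have hXind := Fintype.linearIndependent_iff.mp hx
    refine hXind (fun r => ∑ s, c (r, s) * y s j) ?_
    funext i
    have h2 := hentry i j
    rw [Fintype.sum_prod_type] at h2
    simp only [Finset.sum_apply, Pi.smul_apply, smul_eq_mul, Finset.sum_fn, Pi.zero_apply]
    rw [← h2]
    apply Finset.sum_congr rfl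
    intro r _
    rw [Finset.sum_mul]
    apply Finset.sum_congr rfl
    intro s _
    ring
  intro p
  have hYind := Fintype.linearIndependent_iff.mp hy
  have := hYind (fun s => c (p.1, s)) ?_ p.2
  · simpa using this
  · funext j
    have h3 := hrow j p.1
    simp only [Finset.sum_apply, Pi.smul_apply, smul_eq_mul, Pi.zero_apply]
    simpa using h3

lemma mul_vecMulVec_mul {n : ℕ} (M N : Matrix (Fin n) (Fin n) K) (a b : Fin n → K) :
    M * Matrix.vecMulVec a b * N = Matrix.vecMulVec (M.mulVec a) (Nᵀ.mulVec b) := by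
  ext i j
  simp only [Matrix.mul_apply, Matrix.vecMulVec_apply, Matrix.mulVec, dotProduct,
    Matrix.transpose_apply, Finset.sum_mul, Finset.mul_sum]
  apply Finset.sum_congr rfl
  intro k _
  apply Finset.sum_congr rfl
  intro l _
  ring

end AuxLeonard

set_option maxHeartbeats 1000000 in
theorem stmt3 {K : Type*} [Field K] {d : ℕ} (L : LeonardSystem K d) :
    LinearIndependent K
      (fun p : Fin (d+1) × Fin (d+1) => L.A ^ (p.1 : ℕ) * L.Es 0 * L.A ^ (p.2 : ℕ)) ∧
    Submodule.span K
      (Set.range (fun p : Fin (d+1) × Fin (d+1) =>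
        L.A ^ (p.1 : ℕ) * L.Es 0 * L.A ^ (p.2 : ℕ))) = ⊤ := by
  classical
  have horth : ∀ i j, i ≠ j → L.Es i * L.Es j = 0 := fun i j h => by
    simpa [h] using L.Es_mul i j
  have hidem : ∀ i, L.Es i * L.Es i = L.Es i := fun i => by simpa using L.Es_mul i i
  choose u hune hufix huspan using fun i => rank_one_of_orth L.Es horth hidem L.Es_ne i
  have hxind := indep_of_tridiag L.A L.Es L.Es_sum horth
      (fun i j h => L.EsAEs_zero i j (Or.inr h)) (fun i j h => L.EsAEs_ne i j (Or.inr h))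
      u huspan (hufix 0) (hune 0)
  -- rank one factorisation of Es 0
  choose v hv using fun j => huspan 0 (Pi.single j 1)
  have hfac : L.Es 0 = Matrix.vecMulVec (u 0) v := by
    ext i j
    have h1 := congrFun (hv j) i
    simp only [Matrix.mulVec_single, mul_one, Pi.smul_apply, smul_eq_mul, op_smul_eq_mul, Matrix.col_apply] at h1
    rw [Matrix.vecMulVec_apply]
    exact h1.trans (mul_comm _ _)
  have hvne : v ≠ 0 := by
    intro h
    apply L.Es_ne 0
    rw [hfac, h]
    ext i j
    simp [Matrix.vecMulVec_apply]
  have hdot : v ⬝ᵥ u 0 = 1 := by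
    have hmul : Matrix.vecMulVec (u 0) v * Matrix.vecMulVec (u 0) v
        = (v ⬝ᵥ u 0) • Matrix.vecMulVec (u 0) v := by
      ext i j
      simp only [Matrix.mul_apply, Matrix.vecMulVec_apply, dotProduct,
        Matrix.smul_apply, smul_eq_mul, Finset.sum_mul]
      apply Finset.sum_congr rfl
      intro k _
      ring
    have hid := hidem 0
    rw [hfac, hmul] at hid
    have h2 : (v ⬝ᵥ u 0 - 1) • Matrix.vecMulVec (u 0) v = 0 := by
      rw [sub_smul, one_smul, hid, sub_self]
    rcases smul_eq_zero.mp h2 with h | h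
    · exact sub_eq_zero.mp h
    · exact absurd (hfac ▸ h : L.Es 0 = 0) (L.Es_ne 0)
  -- the transposed system
  set Ft : Fin (d+1) → Matrix (Fin (d+1)) (Fin (d+1)) K := fun i => (L.Es i)ᵀ with hFt
  have horthT : ∀ i j, i ≠ j → Ft i * Ft j = 0 := by
    intro i j h
    rw [hFt, ← Matrix.transpose_mul, horth j i (Ne.symm h), Matrix.transpose_zero]
  have hidemT : ∀ i, Ft i * Ft i = Ft i := by
    intro i
    rw [hFt, ← Matrix.transpose_mul, hidem i]
  have hneT : ∀ i, Ft i ≠ 0 := fun i h =>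
    L.Es_ne i (by simpa [hFt] using congrArg Matrix.transpose h)
  have hsumT : ∑ i, Ft i = 1 := by
    rw [hFt, ← Matrix.transpose_sum, L.Es_sum, Matrix.transpose_one]
  have htr : ∀ i j, (L.Es j * L.A * L.Es i)ᵀ = Ft i * L.Aᵀ * Ft j := by
    intro i j
    rw [Matrix.transpose_mul, Matrix.transpose_mul, ← mul_assoc]
  have hlowT : ∀ i j : Fin (d+1), (j:ℕ) + 1 < (i:ℕ) → Ft i * L.Aᵀ * Ft j = 0 := by
    intro i j h
    rw [← htr, L.EsAEs_zero j i (Or.inl h), Matrix.transpose_zero]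
  have hsupT : ∀ i j : Fin (d+1), (j:ℕ) + 1 = (i:ℕ) → Ft i * L.Aᵀ * Ft j ≠ 0 := by
    intro i j h hz
    rw [← htr] at hz
    apply L.EsAEs_ne j i (Or.inl h)
    have := congrArg Matrix.transpose hz
    simpa using this
  choose u' hu'ne hu'fix hu'span using fun i => rank_one_of_orth Ft horthT hidemT hneT i
  set uu : Fin (d+1) → (Fin (d+1) → K) := fun i => if i = 0 then v else u' i with huu
  have hFt0 : ∀ w, (Ft 0).mulVec w = (u 0 ⬝ᵥ w) • v := by
    intro w
    funext i
    simp only [hFt, hfac, Matrix.mulVec, dotProduct, Matrix.transpose_apply,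
      Matrix.vecMulVec_apply, Pi.smul_apply, smul_eq_mul, Finset.sum_mul]
    apply Finset.sum_congr rfl
    intro k _
    ring
  have huuspan : ∀ i w, ∃ c : K, (Ft i).mulVec w = c • uu i := by
    intro i w
    by_cases h0 : i = 0
    · subst h0
      exact ⟨u 0 ⬝ᵥ w, by simp [huu, hFt0 w]⟩
    · simpa [huu, h0] using hu'span i w
  have huufix : (Ft 0).mulVec (uu 0) = uu 0 := by
    have : uu 0 = v := by simp [huu]
    rw [this, hFt0 v, dotProduct_comm, hdot, one_smul]
  have huune : uu 0 ≠ 0 := by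
    have : uu 0 = v := by simp [huu]
    rw [this]; exact hvne
  have hyind := indep_of_tridiag L.Aᵀ Ft hsumT horthT hlowT hsupT uu huuspan huufix huune
  have huu0 : uu 0 = v := by simp [huu]
  rw [huu0] at hyind
  -- key factorisation
  have hkey : (fun p : Fin (d+1) × Fin (d+1) => L.A ^ (p.1 : ℕ) * L.Es 0 * L.A ^ (p.2 : ℕ))
      = fun p : Fin (d+1) × Fin (d+1) =>
        Matrix.vecMulVec ((L.A ^ (p.1:ℕ)).mulVec (u 0)) ((L.Aᵀ ^ (p.2:ℕ)).mulVec v) := by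
    funext p
    rw [hfac, mul_vecMulVec_mul, ← Matrix.transpose_pow]
  have hind : LinearIndependent K
      (fun p : Fin (d+1) × Fin (d+1) => L.A ^ (p.1 : ℕ) * L.Es 0 * L.A ^ (p.2 : ℕ)) := by
    have h := vecMulVec_indep hxind hyind
    rw [hkey]
    exact h
  refine ⟨hind, ?_⟩
  apply hind.span_eq_top_of_card_eq_finrank
  simp [Module.finrank_matrix]
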